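/- arXiv:1806.03349 — 2 statements merged into one kernel-verified Lean document; each statement's English description precedes it below -/
import Mathlib

section
/- One-step invariant for the 'up' move: with p = x/√T, x ∈ [0, √T], and x' = x + (1 - 2p), we have [1/2 + Φ_alg(x') - Φ_alg(x)] ≥ [(1-p) + Φ_yes(x') - Φ_yes(x)] - 2/√T and [1/2 + Φ_alg(x') - Φ_alg(x)] ≥ [p + Φ_no(x') - Φ_no(x)] - 2/√T. -/
/-- One-step invariant for the 'up' move `(+1,+1)`: with `p = x/√T`, `x ∈ [0, √T]`, and
`x' = x + (1 - 2p)`, the algorithm-side change dominates both adversary-side changes up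
to error `2/√T`. -/
theorem stmt14 (T : ℝ) (hT : 1 ≤ T) (x : ℝ) (hx0 : 0 ≤ x) (hx1 : x ≤ Real.sqrt T) :
    let s := Real.sqrt T
    let p := x / s
    let x' := x + (1 - 2 * p)
    let Φalg := fun y : ℝ => s / 8 - (2 * y - s) ^ 2 / (8 * s)
    let Φyes := fun y : ℝ => (s - y) ^ 2 / (2 * s)
    let Φno := fun y : ℝ => y ^ 2 / (2 * s)
    (1 / 2 + Φalg x' - Φalg x ≥ ((1 - p) + Φyes x' - Φyes x) - 2 / s) ∧
    (1 / 2 + Φalg x' - Φalg x ≥ (p + Φno x' - Φno x) - 2 / s) := by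
  intro s p x' Φalg Φyes Φno
  have hs : (1 : ℝ) ≤ s := by
    have h1 : Real.sqrt 1 ≤ Real.sqrt T := Real.sqrt_le_sqrt hT
    rw [Real.sqrt_one] at h1; exact h1
  have hs0 : (0 : ℝ) < s := by linarith
  have hne : s ≠ 0 := ne_of_gt hs0
  have hp0 : 0 ≤ p := div_nonneg hx0 hs0.le
  have hp1 : p ≤ 1 := (div_le_one hs0).mpr hx1
  have hx : x = p * s := (div_mul_cancel₀ x hne).symm
  simp only [Φalg, Φyes, Φno, x']
  rw [hx]
  constructor <;> rw [ge_iff_le]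
  all_goals {
    field_simp
    have h1 : (0:ℝ) ≤ 1 - 4*p*(1-p) := by nlinarith [sq_nonneg (2*p-1)]
    nlinarith [mul_nonneg (mul_nonneg (mul_nonneg (mul_nonneg hs0.le hs0.le) hs0.le) hs0.le) h1,
      mul_nonneg (mul_nonneg hs0.le hs0.le) hs0.le]
  }
end

section
/- One-step invariant for the 'right' move: with p = x/√T, x ∈ [0, √T - 1], and x' = x + 1, we have [(1/2)(2p - 1) + Φ_alg(x+1) - Φ_alg(x)] ≥ [(1 - p) + Φ_yes(x+1) - Φ_yes(x)] - 2/√T and [(1/2)(2p-1) + Φ_alg(x+1) - Φ_alg(x)] ≥ [-p + Φ_no(x+1) - Φ_no(x)] - 2/√T. -/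
/-- One-step invariant for the 'right' move `(+1,-1)`: with `p = x/√T`, `x ∈ [0, √T - 1]`,
and `x' = x + 1`, the algorithm-side change dominates both adversary-side changes up to
error `2/√T`. -/
theorem stmt15 (T : ℝ) (hT : 1 ≤ T) (x : ℝ) (hx0 : 0 ≤ x) (hx1 : x ≤ Real.sqrt T - 1) :
    let s := Real.sqrt T
    let p := x / s
    let Φalg := fun y : ℝ => s / 8 - (2 * y - s) ^ 2 / (8 * s)
    let Φyes := fun y : ℝ => (s - y) ^ 2 / (2 * s)
    let Φno := fun y : ℝ => y ^ 2 / (2 * s)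
    (1 / 2 * (2 * p - 1) + Φalg (x + 1) - Φalg x ≥ ((1 - p) + Φyes (x + 1) - Φyes x) - 2 / s) ∧
    (1 / 2 * (2 * p - 1) + Φalg (x + 1) - Φalg x ≥ (-p + Φno (x + 1) - Φno x) - 2 / s) := by
  have hs : (1:ℝ) ≤ Real.sqrt T := by
    rw [show (1:ℝ) = Real.sqrt 1 by simp]
    exact Real.sqrt_le_sqrt hT
  have hs0 : (0:ℝ) < Real.sqrt T := by linarith
  constructor <;>
    (field_simp
     ring_nf
     nlinarith [pow_pos hs0 3, pow_pos hs0 4, pow_pos hs0 5, hs0])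
end
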